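/- For rooted binary trees T_a, T_b on k labeled tips with positive branch lengths, if for every pair of tips i,j the path length from the root to the MRCA of i and j agrees between T_a and T_b, and the pendant branch length to each tip agrees, then T_a = T_b (same topology and all branch lengths equal). -/

import Mathlib

/-- Rooted binary trees with tips labeled by `Fin k`; each internal node
stores the branch lengths of the edges to its two children. -/
inductive RTree (k : ℕ) : Type
  | leaf : Fin k → RTree k
  | node : ℝ → RTree k → ℝ → RTree k → RTree k

namespace RTree

variable {k : ℕ}

/-- The list of tip labels of a tree. -/
def tipList : RTree k → List (Fin k)
  | leaf i => [i]
  | node _ l _ r => l.tipList ++ r.tipList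

/-- The set of tip labels of a tree. -/
def tips (T : RTree k) : Finset (Fin k) := T.tipList.toFinset

/-- `T` is a phylogenetic tree on `k` labeled tips: each label occurs exactly once. -/
def IsPhylo (T : RTree k) : Prop := T.tipList.Nodup ∧ ∀ i : Fin k, i ∈ T.tipList

/-- All branch lengths are positive. -/
def PosLens : RTree k → Prop
  | leaf _ => True
  | node a l b r => 0 < a ∧ 0 < b ∧ PosLens l ∧ PosLens r

/-- All branch lengths are nonnegative. -/
def NonnegLens : RTree k → Prop
  | leaf _ => True
  | node a l b r => 0 ≤ a ∧ 0 ≤ b ∧ NonnegLens l ∧ NonnegLens r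

/-- All branch lengths are at most `ε`. -/
def LensLE (ε : ℝ) : RTree k → Prop
  | leaf _ => True
  | node a l b r => a ≤ ε ∧ b ≤ ε ∧ LensLE ε l ∧ LensLE ε r

/-- All branch lengths are equal to `1`. -/
def UnitLens : RTree k → Prop
  | leaf _ => True
  | node a l b r => a = 1 ∧ b = 1 ∧ UnitLens l ∧ UnitLens r

/-- `m T i j`: the number of edges on the path from the root to the
most recent common ancestor of tips `i` and `j`. -/
def m : RTree k → Fin k → Fin k → ℕ
  | leaf _, _, _ => 0
  | node _ l _ r, i, j =>
      if i ∈ l.tips ∧ j ∈ l.tips then m l i j + 1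
      else if i ∈ r.tips ∧ j ∈ r.tips then m r i j + 1
      else 0

/-- `Mlen T i j`: the sum of branch lengths on the path from the root to the
most recent common ancestor of tips `i` and `j`. -/
def Mlen : RTree k → Fin k → Fin k → ℝ
  | leaf _, _, _ => 0
  | node a l b r, i, j =>
      if i ∈ l.tips ∧ j ∈ l.tips then Mlen l i j + a
      else if i ∈ r.tips ∧ j ∈ r.tips then Mlen r i j + b
      else 0

/-- Whether the tree is a single leaf. -/
def isLeaf : RTree k → Bool
  | leaf _ => true
  | node _ _ _ _ => false

/-- `pend T i`: the length of the pendant edge leading to tip `i`. -/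
def pend : RTree k → Fin k → ℝ
  | leaf _, _ => 0
  | node a l b r, i =>
      if i ∈ l.tips then (if l.isLeaf then a else pend l i)
      else if i ∈ r.tips then (if r.isLeaf then b else pend r i)
      else 0

/-- The set of clades (tip sets of rooted subtrees) of a tree.  Two rooted
trees have the same topology iff they have the same set of clades, i.e. their
internal edges induce the same tip partitions. -/
def clades : RTree k → Set (Finset (Fin k))
  | leaf i => {{i}}
  | node a l b r => insert (node a l b r).tips (clades l ∪ clades r)

/-- Equality of rooted trees: same topology (ignoring the left/right order of
children) and equal corresponding branch lengths. -/
inductive TreeEq : RTree k → RTree k → Prop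
  | leaf (i : Fin k) : TreeEq (.leaf i) (.leaf i)
  | node {l l' r r' : RTree k} (a b : ℝ) :
      TreeEq l l' → TreeEq r r' → TreeEq (.node a l b r) (.node a l' b r')
  | swap {l l' r r' : RTree k} (a b : ℝ) :
      TreeEq l l' → TreeEq r r' → TreeEq (.node a l b r) (.node b r' a l')

/-- `S` is the rooted subtree of `T` hanging at a node at edge-depth `d`. -/
inductive SubtreeAt : RTree k → ℕ → RTree k → Prop
  | refl (T : RTree k) : SubtreeAt T 0 T
  | left {l S : RTree k} {d : ℕ} (a b : ℝ) (r : RTree k) :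
      SubtreeAt l d S → SubtreeAt (.node a l b r) (d + 1) S
  | right {r S : RTree k} {d : ℕ} (a b : ℝ) (l : RTree k) :
      SubtreeAt r d S → SubtreeAt (.node a l b r) (d + 1) S

/-- Relabel the tips of a tree by a permutation. -/
def relabel (σ : Equiv.Perm (Fin k)) : RTree k → RTree k
  | leaf i => leaf (σ i)
  | node a l b r => node a (relabel σ l) b (relabel σ r)

/-- The set of unordered pairs of distinct tips, represented by ordered pairs `(i, j)` with `i < j`. -/
def tipPairs (k : ℕ) : Finset (Fin k × Fin k) :=
  Finset.univ.filter (fun p => p.1 < p.2)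

/-- The `λ`-entry of the tree vector `v_λ(T)` at the pair `(i, j)`:
`(1 − λ) m_{i,j} + λ M_{i,j}`. -/
noncomputable def vPair (lam : ℝ) (T : RTree k) (i j : Fin k) : ℝ :=
  (1 - lam) * (T.m i j : ℝ) + lam * T.Mlen i j

/-- The `λ`-entry of the tree vector `v_λ(T)` at tip `i`: `(1 − λ) · 1 + λ p_i`. -/
noncomputable def vTip (lam : ℝ) (T : RTree k) (i : Fin k) : ℝ :=
  (1 - lam) * 1 + lam * T.pend i

/-- The metric `d_λ(T_a, T_b) = ‖v_λ(T_a) − v_λ(T_b)‖₂`. -/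
noncomputable def treeDist (lam : ℝ) (Ta Tb : RTree k) : ℝ :=
  Real.sqrt
    ((∑ p ∈ tipPairs k, (vPair lam Ta p.1 p.2 - vPair lam Tb p.1 p.2) ^ 2) +
      ∑ i : Fin k, (vTip lam Ta i - vTip lam Tb i) ^ 2)

/-- `‖m(T_a) − m(T_b)‖₂`, the Euclidean distance between the topology vectors
(the final `k` entries of `m` are all `1` and contribute nothing). -/
noncomputable def mDist (Ta Tb : RTree k) : ℝ :=
  Real.sqrt (∑ p ∈ tipPairs k, ((Ta.m p.1 p.2 : ℝ) - (Tb.m p.1 p.2 : ℝ)) ^ 2)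

/-- `‖M(T_a) − M(T_b)‖₂`, the Euclidean distance between the
branch-length vectors (root-to-MRCA path lengths and pendant lengths). -/
noncomputable def MDist (Ta Tb : RTree k) : ℝ :=
  Real.sqrt
    ((∑ p ∈ tipPairs k, (Ta.Mlen p.1 p.2 - Tb.Mlen p.1 p.2) ^ 2) +
      ∑ i : Fin k, (Ta.pend i - Tb.pend i) ^ 2)

/-- `D_λ(T_a,T_b) = (1−λ)‖m(T_a)−m(T_b)‖₂ + λ‖M(T_a)−M(T_b)‖₂`. -/
noncomputable def DDist (lam : ℝ) (Ta Tb : RTree k) : ℝ :=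
  (1 - lam) * mDist Ta Tb + lam * MDist Ta Tb

end RTree

namespace RTree

variable {k : ℕ}

lemma tipList_ne_nil (T : RTree k) : T.tipList ≠ [] := by
  induction T with
  | leaf i => simp [tipList]
  | node a l b r ihl ihr => simp [tipList, ihl]

lemma mem_tips {T : RTree k} {i : Fin k} : i ∈ T.tips ↔ i ∈ T.tipList :=
  List.mem_toFinset

lemma nodup_left {a b : ℝ} {l r : RTree k}
    (h : (node a l b r).tipList.Nodup) : l.tipList.Nodup :=
  (List.nodup_append.mp h).1

lemma nodup_right {a b : ℝ} {l r : RTree k}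
    (h : (node a l b r).tipList.Nodup) : r.tipList.Nodup :=
  (List.nodup_append.mp h).2.1

lemma disj_of_nodup {a b : ℝ} {l r : RTree k}
    (h : (node a l b r).tipList.Nodup) {i : Fin k} (hi : i ∈ l.tips) :
    i ∉ r.tips := by
  have := (List.nodup_append'.mp h).2.2
  intro hr
  exact this (mem_tips.mp hi) (mem_tips.mp hr)

lemma tips_node {a b : ℝ} {l r : RTree k} :
    (node a l b r).tips = l.tips ∪ r.tips := by
  simp [tips, tipList]

lemma tips_nonempty (T : RTree k) : T.tips.Nonempty := by
  obtain ⟨i, hi⟩ := List.exists_mem_of_ne_nil _ (tipList_ne_nil T)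
  exact ⟨i, mem_tips.mpr hi⟩

lemma card_tips {T : RTree k} (h : T.tipList.Nodup) :
    T.tips.card = T.tipList.length :=
  List.toFinset_card_of_nodup h

lemma two_le_card_tips {a b : ℝ} {l r : RTree k}
    (h : (node a l b r).tipList.Nodup) : 2 ≤ (node a l b r).tips.card := by
  rw [card_tips h]
  show 2 ≤ (l.tipList ++ r.tipList).length
  rw [List.length_append]
  have h1 := List.length_pos_iff.mpr (tipList_ne_nil l)
  have h2 := List.length_pos_iff.mpr (tipList_ne_nil r)
  omega

lemma eq_leaf_of_tips_singleton {T : RTree k} (h : T.tipList.Nodup)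
    {i : Fin k} (hT : T.tips = {i}) : T = leaf i := by
  cases T with
  | leaf j =>
    have : j ∈ ({i} : Finset (Fin k)) := by
      rw [← hT]; exact mem_tips.mpr (by simp [tipList])
    simp at this; rw [this]
  | node a l b r =>
    have := two_le_card_tips h
    rw [hT] at this; simp at this

lemma Mlen_nonneg {T : RTree k} (h : T.PosLens) (i j : Fin k) :
    0 ≤ T.Mlen i j := by
  induction T with
  | leaf t => simp [Mlen]
  | node a l b r ihl ihr =>
    obtain ⟨h1, h2, h3, h4⟩ := h
    simp only [Mlen]
    split
    · linarith [ihl h3]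
    · split
      · linarith [ihr h4]
      · exact le_refl 0

lemma Mlen_left {a b : ℝ} {l r : RTree k} {i j : Fin k}
    (hi : i ∈ l.tips) (hj : j ∈ l.tips) :
    (node a l b r).Mlen i j = l.Mlen i j + a := by
  simp [Mlen, hi, hj]

lemma Mlen_right {a b : ℝ} {l r : RTree k} {i j : Fin k}
    (hn : (node a l b r).tipList.Nodup)
    (hi : i ∈ r.tips) (hj : j ∈ r.tips) :
    (node a l b r).Mlen i j = r.Mlen i j + b := by
  have hi' : i ∉ l.tips := fun h => disj_of_nodup hn h hi
  simp [Mlen, hi, hj, hi']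

lemma Mlen_cross {a b : ℝ} {l r : RTree k} {i j : Fin k}
    (hn : (node a l b r).tipList.Nodup)
    (hi : i ∈ l.tips) (hj : j ∈ r.tips) :
    (node a l b r).Mlen i j = 0 := by
  have hi' : i ∉ r.tips := disj_of_nodup hn hi
  have hj' : j ∉ l.tips := fun h => disj_of_nodup hn h hj
  simp [Mlen, hi', hj']

lemma Mlen_cross' {a b : ℝ} {l r : RTree k} {i j : Fin k}
    (hn : (node a l b r).tipList.Nodup)
    (hi : i ∈ r.tips) (hj : j ∈ l.tips) :
    (node a l b r).Mlen i j = 0 := by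
  have hi' : i ∉ l.tips := fun h => disj_of_nodup hn h hi
  have hj' : j ∉ r.tips := disj_of_nodup hn hj
  simp [Mlen, hi', hj']

lemma Mlen_pos_iff {a b : ℝ} {l r : RTree k} {i j : Fin k}
    (hn : (node a l b r).tipList.Nodup) (hp : (node a l b r).PosLens)
    (hi : i ∈ (node a l b r).tips) (hj : j ∈ (node a l b r).tips) :
    0 < (node a l b r).Mlen i j ↔ (i ∈ l.tips ↔ j ∈ l.tips) := by
  obtain ⟨h1, h2, h3, h4⟩ := hp
  rw [tips_node, Finset.mem_union] at hi hj
  rcases hi with hi | hi <;> rcases hj with hj | hj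
  · rw [Mlen_left hi hj]
    have := Mlen_nonneg h3 i j
    constructor
    · intro _; exact ⟨fun _ => hj, fun _ => hi⟩
    · intro _; linarith
  · rw [Mlen_cross hn hi hj]
    have hj' : j ∉ l.tips := fun h => disj_of_nodup hn h hj
    constructor
    · intro h; linarith
    · intro h; exact absurd (h.mp hi) hj'
  · rw [Mlen_cross' hn hi hj]
    have hi' : i ∉ l.tips := fun h => disj_of_nodup hn h hi
    constructor
    · intro h; linarith
    · intro h; exact absurd (h.mpr hj) hi'
  · rw [Mlen_right hn hi hj]
    have := Mlen_nonneg h4 i j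
    have hi' : i ∉ l.tips := fun h => disj_of_nodup hn h hi
    have hj' : j ∉ l.tips := fun h => disj_of_nodup hn h hj
    constructor
    · intro _; exact ⟨fun h => absurd h hi', fun h => absurd h hj'⟩
    · intro _; linarith

lemma pend_left {a b : ℝ} {l r : RTree k} {i : Fin k} (hi : i ∈ l.tips) :
    (node a l b r).pend i = if l.isLeaf then a else l.pend i := by
  simp [pend, hi]

lemma pend_right {a b : ℝ} {l r : RTree k} {i : Fin k}
    (hn : (node a l b r).tipList.Nodup) (hi : i ∈ r.tips) :
    (node a l b r).pend i = if r.isLeaf then b else r.pend i := by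
  have hi' : i ∉ l.tips := fun h => disj_of_nodup hn h hi
  simp [pend, hi, hi']

/-- A node and its flip have the same tips. -/
lemma tips_flip {a b : ℝ} {l r : RTree k} :
    (node b r a l).tips = (node a l b r).tips := by
  rw [tips_node, tips_node, Finset.union_comm]

lemma nodup_flip {a b : ℝ} {l r : RTree k}
    (h : (node a l b r).tipList.Nodup) : (node b r a l).tipList.Nodup := by
  have h' : (l.tipList ++ r.tipList).Nodup := h
  rw [List.nodup_append'] at h'
  show (r.tipList ++ l.tipList).Nodup
  rw [List.nodup_append']
  exact ⟨h'.2.1, h'.1, h'.2.2.symm⟩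

lemma posLens_flip {a b : ℝ} {l r : RTree k}
    (h : (node a l b r).PosLens) : (node b r a l).PosLens :=
  ⟨h.2.1, h.1, h.2.2.2, h.2.2.1⟩

lemma Mlen_flip {a b : ℝ} {l r : RTree k}
    (hn : (node a l b r).tipList.Nodup) (i j : Fin k) :
    (node b r a l).Mlen i j = (node a l b r).Mlen i j := by
  have hn' := nodup_flip hn
  by_cases hi : i ∈ l.tips <;> by_cases hj : j ∈ l.tips
  · rw [Mlen_left hi hj, Mlen_right hn' hi hj]
  · have hi' : i ∉ r.tips := disj_of_nodup hn hi
    by_cases hj2 : j ∈ r.tips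
    · rw [Mlen_cross hn hi hj2, Mlen_cross' hn' hi hj2]
    · simp [Mlen, hi', hj, hj2]
  · have hj' : j ∉ r.tips := disj_of_nodup hn hj
    by_cases hi2 : i ∈ r.tips
    · rw [Mlen_cross' hn hi2 hj, Mlen_cross hn' hi2 hj]
    · simp [Mlen, hj', hi, hi2]
  · by_cases hi2 : i ∈ r.tips <;> by_cases hj2 : j ∈ r.tips
    · rw [Mlen_right hn hi2 hj2, Mlen_left hi2 hj2]
    · simp [Mlen, hi, hj, hj2]
    · simp [Mlen, hi, hj, hi2]
    · simp [Mlen, hi, hj, hi2, hj2]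

lemma pend_flip {a b : ℝ} {l r : RTree k}
    (hn : (node a l b r).tipList.Nodup) (i : Fin k) :
    (node b r a l).pend i = (node a l b r).pend i := by
  have hn' := nodup_flip hn
  by_cases hi : i ∈ l.tips
  · rw [pend_left hi, pend_right hn' hi]
  · by_cases hi2 : i ∈ r.tips
    · rw [pend_right hn hi2, pend_left hi2]
    · simp [pend, hi, hi2]

lemma treeEq_flip {T : RTree k} {a b : ℝ} {l r : RTree k}
    (h : TreeEq T (node b r a l)) : TreeEq T (node a l b r) := by
  cases h with
  | node _ _ h1 h2 => exact TreeEq.swap _ _ h1 h2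
  | swap _ _ h1 h2 => exact TreeEq.node _ _ h1 h2

end RTree

namespace RTree

variable {k : ℕ}

lemma tips_subset_left {a b : ℝ} {l r : RTree k} :
    l.tips ⊆ (node a l b r).tips := by
  rw [tips_node]; exact Finset.subset_union_left

lemma tips_subset_right {a b : ℝ} {l r : RTree k} :
    r.tips ⊆ (node a l b r).tips := by
  rw [tips_node]; exact Finset.subset_union_right

/-- In a non-leaf tree there is a pair of tips whose MRCA is the root. -/
lemma exists_cross_pair {a b : ℝ} {l r : RTree k}
    (hn : (node a l b r).tipList.Nodup) :
    ∃ i ∈ (node a l b r).tips, ∃ j ∈ (node a l b r).tips,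
      (node a l b r).Mlen i j = 0 := by
  obtain ⟨i, hi⟩ := tips_nonempty l
  obtain ⟨j, hj⟩ := tips_nonempty r
  exact ⟨i, tips_subset_left hi, j, tips_subset_right hj, Mlen_cross hn hi hj⟩

/-- If the left subtrees have the same tips, the left edge lengths agree. -/
lemma edge_eq {a b a' b' : ℝ} {l r l' r' : RTree k}
    (hna : (node a l b r).tipList.Nodup) (hnb : (node a' l' b' r').tipList.Nodup)
    (hpa : (node a l b r).PosLens) (hpb : (node a' l' b' r').PosLens)
    (hll : l.tips = l'.tips)
    (hM : ∀ i ∈ l.tips, ∀ j ∈ l.tips,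
      (node a l b r).Mlen i j = (node a' l' b' r').Mlen i j)
    (hp : ∀ i ∈ l.tips, (node a l b r).pend i = (node a' l' b' r').pend i) :
    a = a' := by
  cases l with
  | leaf i =>
    have hl' : l' = leaf i :=
      eq_leaf_of_tips_singleton (nodup_left hnb) (by rw [← hll]; simp [tips, tipList])
    subst hl'
    have hi : i ∈ (leaf i : RTree k).tips := by simp [tips, tipList]
    have h := hp i hi
    rw [pend_left hi, pend_left hi] at h
    simpa [isLeaf] using h
  | node a2 l2 b2 r2 =>
    have hcard : 2 ≤ l'.tips.card := hll ▸ two_le_card_tips (nodup_left hna)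
    cases l' with
    | leaf j => simp [tips, tipList] at hcard
    | node a2' l2' b2' r2' =>
      obtain ⟨i1, hi1, j1, hj1, hz1⟩ := exists_cross_pair (nodup_left hna)
      obtain ⟨i2, hi2, j2, hj2, hz2⟩ := exists_cross_pair (nodup_left hnb)
      have hi1' : i1 ∈ (node a2' l2' b2' r2').tips := hll ▸ hi1
      have hj1' : j1 ∈ (node a2' l2' b2' r2').tips := hll ▸ hj1
      have hi2' : i2 ∈ (node a2 l2 b2 r2).tips := hll ▸ hi2
      have hj2' : j2 ∈ (node a2 l2 b2 r2).tips := hll ▸ hj2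
      have h1 := hM i1 hi1 j1 hj1
      rw [Mlen_left hi1 hj1, Mlen_left hi1' hj1', hz1] at h1
      have h2 := hM i2 hi2' j2 hj2'
      rw [Mlen_left hi2' hj2', Mlen_left hi2 hj2, hz2] at h2
      have n1 := Mlen_nonneg hpb.2.2.1 i1 j1
      have n2 := Mlen_nonneg hpa.2.2.1 i2 j2
      linarith

theorem treeEq_of_data : ∀ Ta Tb : RTree k,
    Ta.tipList.Nodup → Tb.tipList.Nodup → Ta.tips = Tb.tips →
    Ta.PosLens → Tb.PosLens →
    (∀ i ∈ Ta.tips, ∀ j ∈ Ta.tips, Ta.Mlen i j = Tb.Mlen i j) →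
    (∀ i ∈ Ta.tips, Ta.pend i = Tb.pend i) → TreeEq Ta Tb := by
  intro Ta
  induction Ta with
  | leaf i =>
    intro Tb hna hnb hts hpa hpb hM hp
    have : Tb = leaf i :=
      eq_leaf_of_tips_singleton hnb (by rw [← hts]; simp [tips, tipList])
    rw [this]
    exact TreeEq.leaf i
  | node a l b r ihl ihr =>
    intro Tb hna hnb hts hpa hpb hM hp
    cases Tb with
    | leaf j =>
      have h2 := two_le_card_tips hna
      rw [hts] at h2
      simp [tips, tipList] at h2
    | node a' l' b' r' =>
      obtain ⟨i0, hi0⟩ := tips_nonempty l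
      have hi0T : i0 ∈ (node a l b r).tips := tips_subset_left hi0
      -- the aligned case, as a reusable fact
      have key : ∀ (a' b' : ℝ) (l' r' : RTree k),
          (node a' l' b' r').tipList.Nodup →
          (node a l b r).tips = (node a' l' b' r').tips →
          (node a' l' b' r').PosLens →
          (∀ i ∈ (node a l b r).tips, ∀ j ∈ (node a l b r).tips,
            (node a l b r).Mlen i j = (node a' l' b' r').Mlen i j) →
          (∀ i ∈ (node a l b r).tips, (node a l b r).pend i = (node a' l' b' r').pend i) →
          i0 ∈ l'.tips → TreeEq (node a l b r) (node a' l' b' r') := by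
        clear hnb hts hpb hM hp
        intro a' b' l' r' hnb hts hpb hM hp hside
        have hsame : ∀ i ∈ (node a l b r).tips, ∀ j ∈ (node a l b r).tips,
            ((i ∈ l.tips ↔ j ∈ l.tips) ↔ (i ∈ l'.tips ↔ j ∈ l'.tips)) := by
          intro i hi j hj
          rw [← Mlen_pos_iff hna hpa hi hj,
            ← Mlen_pos_iff hnb hpb (hts ▸ hi) (hts ▸ hj), hM i hi j hj]
        have hll : l.tips = l'.tips := by
          ext j
          constructor
          · intro hj
            have hjT : j ∈ (node a l b r).tips := tips_subset_left hj
            exact ((hsame i0 hi0T j hjT).mp ⟨fun _ => hj, fun _ => hi0⟩).mp hside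
          · intro hj
            have hjT : j ∈ (node a l b r).tips := by
              rw [hts]; exact tips_subset_left hj
            exact ((hsame i0 hi0T j hjT).mpr ⟨fun _ => hj, fun _ => hside⟩).mp hi0
        have hrr : r.tips = r'.tips := by
          ext j
          constructor
          · intro hj
            have hjT : j ∈ (node a' l' b' r').tips := by
              rw [← hts]; exact tips_subset_right hj
            rw [tips_node, Finset.mem_union] at hjT
            rcases hjT with h | h
            · have hjl : j ∈ l.tips := by rw [hll]; exact h
              exact absurd hj (disj_of_nodup hna hjl)
            · exact h
          · intro hj
            have hjT : j ∈ (node a l b r).tips := by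
              rw [hts]; exact tips_subset_right hj
            rw [tips_node, Finset.mem_union] at hjT
            rcases hjT with h | h
            · exact absurd hj (disj_of_nodup hnb (hll ▸ h))
            · exact h
        have hMl : ∀ i ∈ l.tips, ∀ j ∈ l.tips,
            (node a l b r).Mlen i j = (node a' l' b' r').Mlen i j :=
          fun i hi j hj => hM i (tips_subset_left hi) j (tips_subset_left hj)
        have hpl : ∀ i ∈ l.tips, (node a l b r).pend i = (node a' l' b' r').pend i :=
          fun i hi => hp i (tips_subset_left hi)
        have haa : a = a' := edge_eq hna hnb hpa hpb hll hMl hpl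
        have hbb : b = b' := by
          refine edge_eq (nodup_flip hna) (nodup_flip hnb) (posLens_flip hpa)
            (posLens_flip hpb) hrr ?_ ?_
          · intro i hi j hj
            rw [Mlen_flip hna, Mlen_flip hnb]
            exact hM i (tips_subset_right hi) j (tips_subset_right hj)
          · intro i hi
            rw [pend_flip hna, pend_flip hnb]
            exact hp i (tips_subset_right hi)
        subst haa
        subst hbb
        have hel : TreeEq l l' := by
          apply ihl l' (nodup_left hna) (nodup_left hnb) hll hpa.2.2.1 hpb.2.2.1
          · intro i hi j hj
            have h := hMl i hi j hj
            rw [Mlen_left hi hj, Mlen_left (hll ▸ hi) (hll ▸ hj)] at h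
            linarith
          · intro i hi
            cases l with
            | leaf i1 =>
              have hl' : l' = leaf i1 := eq_leaf_of_tips_singleton (nodup_left hnb)
                (by rw [← hll]; simp [tips, tipList])
              subst hl'
              simp [pend]
            | node a2 l2 b2 r2 =>
              have hcard : 2 ≤ l'.tips.card := hll ▸ two_le_card_tips (nodup_left hna)
              cases l' with
              | leaf j1 => simp [tips, tipList] at hcard
              | node a2' l2' b2' r2' =>
                have h := hpl i hi
                have hi' : i ∈ (node a2' l2' b2' r2').tips := by
                  rw [← hll]; exact hi
                rw [pend_left hi, pend_left hi'] at h
                simpa [isLeaf] using h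
        have her : TreeEq r r' := by
          apply ihr r' (nodup_right hna) (nodup_right hnb) hrr hpa.2.2.2 hpb.2.2.2
          · intro i hi j hj
            have h := hM i (tips_subset_right hi) j (tips_subset_right hj)
            rw [Mlen_right hna hi hj, Mlen_right hnb (hrr ▸ hi) (hrr ▸ hj)] at h
            linarith
          · intro i hi
            cases r with
            | leaf i1 =>
              have hr' : r' = leaf i1 := eq_leaf_of_tips_singleton
                ((List.nodup_append.mp hnb).2.1)
                (by rw [← hrr]; simp [tips, tipList])
              subst hr'
              simp [pend]
            | node a2 l2 b2 r2 =>
              have hcard : 2 ≤ r'.tips.card := hrr ▸ two_le_card_tips (nodup_right hna)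
              cases r' with
              | leaf j1 => simp [tips, tipList] at hcard
              | node a2' l2' b2' r2' =>
                have h := hp i (tips_subset_right hi)
                have hi' : i ∈ (node a2' l2' b2' r2').tips := by
                  rw [← hrr]; exact hi
                rw [pend_right hna hi, pend_right hnb hi'] at h
                simpa [isLeaf] using h
        exact TreeEq.node a b hel her
      by_cases hside : i0 ∈ l'.tips
      · exact key a' b' l' r' hnb hts hpb hM hp hside
      · have hside' : i0 ∈ r'.tips := by
          have : i0 ∈ (node a' l' b' r').tips := hts ▸ hi0T
          rw [tips_node, Finset.mem_union] at this
          tauto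
        apply treeEq_flip
        refine key b' a' r' l' (nodup_flip hnb) (hts.trans tips_flip.symm)
          (posLens_flip hpb) ?_ ?_ hside'
        · intro i hi j hj
          rw [Mlen_flip hnb]
          exact hM i hi j hj
        · intro i hi
          rw [pend_flip hnb]
          exact hp i hi

end RTree

open RTree in
/-- if all root-to-MRCA path lengths and all pendant branch
lengths agree, the trees are equal (same topology and branch lengths). -/
theorem same_M_implies_equal {k : ℕ} (Ta Tb : RTree k)
    (ha : Ta.IsPhylo) (hb : Tb.IsPhylo)
    (hpa : Ta.PosLens) (hpb : Tb.PosLens)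
    (hM : ∀ i j : Fin k, Ta.Mlen i j = Tb.Mlen i j)
    (hp : ∀ i : Fin k, Ta.pend i = Tb.pend i) :
    TreeEq Ta Tb := by
  have hta : Ta.tips = Finset.univ :=
    Finset.eq_univ_iff_forall.mpr fun i => mem_tips.mpr (ha.2 i)
  have htb : Tb.tips = Finset.univ :=
    Finset.eq_univ_iff_forall.mpr fun i => mem_tips.mpr (hb.2 i)
  exact treeEq_of_data Ta Tb ha.1 hb.1 (hta.trans htb.symm) hpa hpb
    (fun i _ j _ => hM i j) (fun i _ => hp i)
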